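/- Let Π = (V, Λ, C, dom, Bad) be a CSP whose dependency graph D := D_Π is locally finite. Fix c ∈ C, R, N ∈ ℕ, and ε ∈ (0,1). A table t is (c, R, N, ε)-locally good if and only if for all r < R, no (c, R)-bounded (c, r, N, ε)-Følner MT-sequence is consistent with (Π_{c,r}, t). -/

import Mathlib

open MeasureTheory Set
open scoped ENNReal

/-- A constraint satisfaction problem (CSP): variables `V`, labels `Λ`, constraints `C`.
`dom c` is the finite set of variables of the constraint `c`, and `Bad c` is the set of
bad labelings `φ : dom c → Λ`. -/
structure CSP (V : Type*) (Λ : Type*) (C : Type*) where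
  dom : C → Set V
  dom_finite : ∀ c, (dom c).Finite
  Bad : (c : C) → Set (↥(dom c) → Λ)

namespace CSP

variable {V Λ C : Type*}

/-- A labeling `f : V → Λ` violates the constraint `c` if its restriction to `dom c`
is a bad labeling. -/
def violates (Φ : CSP V Λ C) (f : V → Λ) (c : C) : Prop :=
  (fun v : ↥(Φ.dom c) => f v) ∈ Φ.Bad c

/-- A solution of a CSP: a labeling satisfying every constraint. -/
def IsSolution (Φ : CSP V Λ C) (f : V → Λ) : Prop := ∀ c, ¬ Φ.violates f c

/-- The dependency graph of a CSP: distinct constraints are adjacent iff their domains meet. -/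
def depGraph (Φ : CSP V Λ C) : SimpleGraph C where
  Adj c c' := c ≠ c' ∧ (Φ.dom c ∩ Φ.dom c').Nonempty
  symm := by
    constructor
    intro c c' h
    exact ⟨h.1.symm, by rw [Set.inter_comm]; exact h.2⟩
  loopless := ⟨fun c h => h.1 rfl⟩

/-- `P[Bad(c)]`: the probability of the set of bad labelings of `c` with respect to the
product measure `P^{dom c}`. -/
noncomputable def badProb [MeasurableSpace Λ] (Φ : CSP V Λ C) (P : Measure Λ) (c : C) : ℝ≥0∞ :=
  haveI := (Φ.dom_finite c).fintype
  Measure.pi (fun _ : ↥(Φ.dom c) => P) (Φ.Bad c)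

end CSP

/-- The ball of radius `R` around `c`: vertices joined to `c` by a path of at most `R` edges. -/
def gball {C : Type*} (G : SimpleGraph C) (c : C) : ℕ → Set C
  | 0 => {c}
  | R + 1 => gball G c R ∪ ⋃ x ∈ gball G c R, G.neighborSet x

lemma gball_finite {C : Type*} (G : SimpleGraph C)
    (hlf : ∀ v, (G.neighborSet v).Finite) (c : C) : ∀ R, (gball G c R).Finite
  | 0 => Set.finite_singleton c
  | (R + 1) => ((gball_finite G hlf c R).union
      ((gball_finite G hlf c R).biUnion (fun x _ => hlf x)))

/-- The growth function `γ_G(R) = sup_v |B_G(v,R)|`, valued in `ℕ∞`. -/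
noncomputable def growth {C : Type*} (G : SimpleGraph C) (R : ℕ) : ℕ∞ :=
  ⨆ v, (gball G v R).encard

/-- The exponential growth rate `egr(G) = inf_{R ≥ 1} γ_G(R)^{1/R}`, valued in `ℝ≥0∞`. -/
noncomputable def egr {C : Type*} (G : SimpleGraph C) : ℝ≥0∞ :=
  ⨅ R : {n : ℕ // 1 ≤ n}, ((growth G R.1 : ℝ≥0∞) ^ ((R.1 : ℝ)⁻¹))

/-- The closed neighborhood `N[c]` of a vertex in a graph. -/
def closedNbhd {C : Type*} (G : SimpleGraph C) (c : C) : Set C :=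
  insert c (G.neighborSet c)

/-- A set of vertices is independent if no two of its members are adjacent. -/
def IsIndep {C : Type*} (G : SimpleGraph C) (s : Set C) : Prop :=
  ∀ c ∈ s, ∀ c' ∈ s, ¬ G.Adj c c'

section BorelCSP

variable {V Λ C : Type*}

/-- The finite set obtained as the image of a tuple. -/
noncomputable def finsetOfTuple {X : Type*} (n : ℕ) (t : Fin n → X) : Finset X :=
  haveI := Classical.decEq X
  Finset.image t Finset.univ

/-- The standard Borel structure on the space of finite subsets of `X`: a set of finite sets is
measurable iff for each `n` its preimage under the map `(x_1, …, x_n) ↦ {x_1, …, x_n}` is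
measurable. -/
noncomputable def finsetMS (X : Type*) [MeasurableSpace X] : MeasurableSpace (Finset X) :=
  ⨅ n : ℕ, MeasurableSpace.map (finsetOfTuple (X := X) n) MeasurableSpace.pi

/-- The graph of a labeling `φ : dom c → Λ`, as a finite subset of `V × Λ`; this encodes a finite
partial function `V ⇀ Λ`. -/
noncomputable def CSP.graphOf (Φ : CSP V Λ C) (c : C) (φ : ↥(Φ.dom c) → Λ) :
    Finset (V × Λ) :=
  haveI := Classical.decEq (V × Λ)
  (Φ.dom_finite c).toFinset.attach.image
    (fun v => (v.1, φ ⟨v.1, (Φ.dom_finite c).mem_toFinset.mp v.2⟩))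

/-- A CSP on standard Borel spaces is Borel if `dom` is a Borel map into the space of finite
subsets of `V` and `{(c, φ) : φ ∈ Bad c}` is Borel in `C × (finite partial functions V ⇀ Λ)`,
finite partial functions being encoded by their graphs. -/
structure IsBorelCSP [MeasurableSpace V] [MeasurableSpace Λ] [MeasurableSpace C]
    (Φ : CSP V Λ C) : Prop where
  dom_meas : Measurable[_, finsetMS V] (fun c => (Φ.dom_finite c).toFinset)
  bad_meas : MeasurableSet[(inferInstance : MeasurableSpace C).prod (finsetMS (V × Λ))]
    {p : C × Finset (V × Λ) | ∃ φ ∈ Φ.Bad p.1, p.2 = Φ.graphOf p.1 φ}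

end BorelCSP

section MT

variable {V Λ C : Type*}

open scoped Classical

/-- The level function of the Moser–Tardos algorithm run with the sequence `I` of chosen
independent sets: `lev_0(v) = 0` and `lev_{n+1}(v) = lev_n(v) + 1` exactly when `v` belongs to the
domain of some constraint in `I n`. -/
noncomputable def MTlev (Φ : CSP V Λ C) (I : ℕ → Set C) : ℕ → V → ℕ
  | 0, _ => 0
  | n + 1, v => MTlev Φ I n v + (if ∃ c ∈ I n, v ∈ Φ.dom c then 1 else 0)

/-- The labeling used at step `n` of the Moser–Tardos algorithm with table `t`. -/
noncomputable def CSP.MTstep (Φ : CSP V Λ C) (t : V → ℕ → Λ) (I : ℕ → Set C)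
    (n : ℕ) : V → Λ :=
  fun v => t v (MTlev Φ I n v)

/-- An MT-sequence `I` is consistent with `(Φ, t)` if it can be produced by the Moser–Tardos
algorithm on input `(Φ, t)`: each `I n` is an independent set of constraints violated by the
current labeling. -/
noncomputable def CSP.Consistent (Φ : CSP V Λ C) (t : V → ℕ → Λ) (I : ℕ → Set C) : Prop :=
  (∀ n, IsIndep Φ.depGraph (I n)) ∧ ∀ n, ∀ c ∈ I n, Φ.violates (Φ.MTstep t I n) c

/-- An MT-sequence consistent with `(Φ, t)` that can be produced by the *maximal* Moser–Tardos
algorithm: each `I n` is a maximal independent subset of the set of violated constraints. -/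
noncomputable def CSP.MaximalCons (Φ : CSP V Λ C) (t : V → ℕ → Λ) (I : ℕ → Set C) : Prop :=
  Φ.Consistent t I ∧
    ∀ n, ∀ c, Φ.violates (Φ.MTstep t I n) c → c ∉ I n → ∃ c' ∈ I n, Φ.depGraph.Adj c c'

/-- The levels at `v` stabilize, i.e. `lev(v) = lim_n lev_n(v) < ∞`: the output labeling of the
run of the Moser–Tardos algorithm is defined at `v`. -/
def StabilizesAt (Φ : CSP V Λ C) (I : ℕ → Set C) (v : V) : Prop :=
  ∃ N, ∀ n, N ≤ n → MTlev Φ I n v = MTlev Φ I N v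

/-- A table is good if every run of the Moser–Tardos algorithm on `(Φ, t)` produces a labeling
defined on all of `V`. -/
def CSP.GoodTable (Φ : CSP V Λ C) (t : V → ℕ → Λ) : Prop :=
  ∀ I : ℕ → Set C, Φ.Consistent t I → ∀ v, StabilizesAt Φ I v

/-- The `(c, r)`-local CSP `Π_{c,r}`: constraints at distance more than `r` from `c` in the
dependency graph are always violated. -/
noncomputable def CSP.localCSP (Φ : CSP V Λ C) (c : C) (r : ℕ) : CSP V Λ C where
  dom := Φ.dom
  dom_finite := Φ.dom_finite
  Bad a := if a ∈ gball Φ.depGraph c r then Φ.Bad a else Set.univ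

/-- A finite MT-sequence: `Σ_n |I_n| < ∞`. -/
def FiniteMTSeq {C : Type*} (I : ℕ → Set C) : Prop :=
  {q : C × ℕ | q.1 ∈ I q.2}.Finite

/-- A finite MT-sequence is `(c, r, N, ε)`-Følner if `Σ_n |I_n ∩ B_D(c,r)| ≥ N` and
`Σ_n |I_n \ B_D(c,r)| < ε · Σ_n |I_n|`. -/
def CSP.Folner (Φ : CSP V Λ C) (I : ℕ → Set C) (c : C) (r N : ℕ) (ε : ℝ) : Prop :=
  FiniteMTSeq I ∧
    N ≤ {q : C × ℕ | q.1 ∈ I q.2 ∧ q.1 ∈ gball Φ.depGraph c r}.ncard ∧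
    ({q : C × ℕ | q.1 ∈ I q.2 ∧ q.1 ∉ gball Φ.depGraph c r}.ncard : ℝ) <
      ε * ({q : C × ℕ | q.1 ∈ I q.2}.ncard : ℝ)

/-- A table is `(c, R, N, ε)`-locally good if for all `r < R` there is no `(c, r, N, ε)`-Følner
MT-sequence consistent with `(Φ_{c,r}, t)`. -/
noncomputable def CSP.LocallyGoodAt (Φ : CSP V Λ C) (t : V → ℕ → Λ) (c : C) (R N : ℕ)
    (ε : ℝ) : Prop :=
  ∀ r < R, ¬ ∃ I : ℕ → Set C, (Φ.localCSP c r).Consistent t I ∧ Φ.Folner I c r N ε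

/-- A table is `(R, N, ε)`-locally good if it is `(c, R, N, ε)`-locally good for every `c`. -/
noncomputable def CSP.LocallyGood (Φ : CSP V Λ C) (t : V → ℕ → Λ) (R N : ℕ) (ε : ℝ) : Prop :=
  ∀ c, Φ.LocallyGoodAt t c R N ε

/-- `dom_R(c) = ⋃_{a ∈ B_D(c,R)} dom(a)`. -/
def CSP.domR (Φ : CSP V Λ C) (c : C) (R : ℕ) : Set V :=
  ⋃ a ∈ gball Φ.depGraph c R, Φ.dom a

lemma CSP.domR_finite (Φ : CSP V Λ C) (hlf : ∀ c, (Φ.depGraph.neighborSet c).Finite)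
    (c : C) (R : ℕ) : (Φ.domR c R).Finite :=
  (gball_finite _ hlf c R).biUnion (fun a _ => Φ.dom_finite a)

/-- The set `LBad_{R,N,ε}(c)` of partial tables `φ : dom_R(c) → Λ^ℕ` such that some
(equivalently, every) table extending `φ` is not `(c, R, N, ε)`-locally good. -/
noncomputable def CSP.LBad (Φ : CSP V Λ C) (c : C) (R N : ℕ) (ε : ℝ) :
    Set (↥(Φ.domR c R) → ℕ → Λ) :=
  {φ | ∃ t : V → ℕ → Λ, (∀ v : ↥(Φ.domR c R), t v = φ v) ∧
    ¬ Φ.LocallyGoodAt t c R N ε}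

/-- The CSP `LG(R, N, ε)` whose solutions are exactly the `(R, N, ε)`-locally good tables. -/
noncomputable def CSP.LG (Φ : CSP V Λ C) (R N : ℕ) (ε : ℝ)
    (h : ∀ c, (Φ.domR c R).Finite) : CSP V (ℕ → Λ) C where
  dom c := Φ.domR c R
  dom_finite := h
  Bad c := Φ.LBad c R N ε

end MT

/-- `Q` is the product of copies of `P` over the index set `ι`: the measure of every measurable
cylinder is the corresponding finite product. -/
def IsProductOf {ι Λ : Type*} [MeasurableSpace Λ] (Q : Measure (ι → Λ)) (P : Measure Λ) : Prop :=
  ∀ (s : Finset ι) (A : ι → Set Λ), (∀ i ∈ s, MeasurableSet (A i)) →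
    Q {g | ∀ i ∈ s, g i ∈ A i} = ∏ i ∈ s, P (A i)

lemma gball_mono' {C : Type*} (G : SimpleGraph C) (c : C) {m n : ℕ} (h : m ≤ n) :
    gball G c m ⊆ gball G c n := by
  induction h with
  | refl => exact subset_rfl
  | step _ ih => exact ih.trans (Set.subset_union_left)

lemma mem_gball_succ_of_adj {C : Type*} (G : SimpleGraph C) {c a b : C} {r : ℕ}
    (ha : a ∈ gball G c r) (h : G.Adj a b) : b ∈ gball G c (r + 1) :=
  Set.mem_union_right _ (Set.mem_biUnion ha h)

lemma MTlev_congr {V Λ C : Type*} (Φ : CSP V Λ C) (I J : ℕ → Set C) (v : V)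
    (h : ∀ n, (∃ c ∈ I n, v ∈ Φ.dom c) ↔ (∃ c ∈ J n, v ∈ Φ.dom c)) :
    ∀ n, MTlev Φ I n v = MTlev Φ J n v
  | 0 => rfl
  | n + 1 => by
    classical
    simp only [MTlev, MTlev_congr Φ I J v h n]
    rw [if_congr (h n) rfl rfl]

/-- **Lemma.** A table `t` is `(c, R, N, ε)`-locally good iff for all `r < R` no `(c, R)`-bounded
`(c, r, N, ε)`-Følner MT-sequence is consistent with `(Φ_{c,r}, t)`. -/
theorem locally_good_iff_bounded
    {V Λ C : Type*} (Φ : CSP V Λ C)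
    (hlf : ∀ c, (Φ.depGraph.neighborSet c).Finite)
    (c : C) (R N : ℕ) (ε : ℝ) (hε0 : 0 < ε) (hε1 : ε < 1) (t : V → ℕ → Λ) :
    Φ.LocallyGoodAt t c R N ε ↔
      ∀ r < R, ¬ ∃ I : ℕ → Set C, (Φ.localCSP c r).Consistent t I ∧
        Φ.Folner I c r N ε ∧ (∀ n, I n ⊆ gball Φ.depGraph c R) := by
  constructor
  · rintro h r hr ⟨I, h1, h2, -⟩
    exact h r hr ⟨I, h1, h2⟩
  · intro h r hr hex
    obtain ⟨I, hcons, hfin, hN, hfol⟩ := hex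
    apply h r hr
    set G := Φ.depGraph with hG
    set S := gball G c (r + 1) with hS
    have hrS : gball G c r ⊆ S := gball_mono' G c (Nat.le_succ r)
    set J : ℕ → Set C := fun n => I n ∩ S with hJ
    -- level agreement
    have key : ∀ (a : C), a ∈ gball G c r → ∀ v ∈ Φ.dom a, ∀ n,
        (∃ c' ∈ I n, v ∈ Φ.dom c') ↔ (∃ c' ∈ J n, v ∈ Φ.dom c') := by
      intro a ha v hva n
      constructor
      · rintro ⟨c', hc', hv'⟩
        refine ⟨c', ⟨hc', ?_⟩, hv'⟩
        by_cases hca : c' = a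
        · exact hrS (hca ▸ ha)
        · exact mem_gball_succ_of_adj G ha (show Φ.depGraph.Adj a c' from ⟨fun e => hca e.symm, ⟨v, hva, hv'⟩⟩)
      · rintro ⟨c', hc', hv'⟩
        exact ⟨c', hc'.1, hv'⟩
    refine ⟨J, ⟨fun n a ha a' ha' => hcons.1 n a ha.1 a' ha'.1, ?_⟩, ?_, ?_⟩
    · -- violation
      intro n a ha
      by_cases har : a ∈ gball G c r
      · have hv := hcons.2 n a ha.1
        have hfun : (fun v : ↥((Φ.localCSP c r).dom a) =>
            (Φ.localCSP c r).MTstep t J n v) =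
            (fun v : ↥((Φ.localCSP c r).dom a) =>
            (Φ.localCSP c r).MTstep t I n v) := by
          funext v
          show t v (MTlev (Φ.localCSP c r) J n v) = t v (MTlev (Φ.localCSP c r) I n v)
          rw [MTlev_congr (Φ.localCSP c r) I J v (key a har v v.2) n]
        show (fun v : ↥((Φ.localCSP c r).dom a) =>
            (Φ.localCSP c r).MTstep t J n v) ∈ (Φ.localCSP c r).Bad a
        rw [hfun]; exact hv
      · show _ ∈ (Φ.localCSP c r).Bad a
        simp only [CSP.localCSP, if_neg har]
        rw [if_neg (show a ∉ gball Φ.depGraph c r from har)]; exact Set.mem_univ _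
    · -- Folner
      have hsub : {q : C × ℕ | q.1 ∈ J q.2} ⊆ {q : C × ℕ | q.1 ∈ I q.2} :=
        fun q hq => hq.1
      have hfinJ : FiniteMTSeq J := hfin.subset hsub
      refine ⟨hfinJ, ?_, ?_⟩
      · have heq : {q : C × ℕ | q.1 ∈ J q.2 ∧ q.1 ∈ gball G c r} =
            {q : C × ℕ | q.1 ∈ I q.2 ∧ q.1 ∈ gball G c r} := by
          ext q
          exact ⟨fun hq => ⟨hq.1.1, hq.2⟩, fun hq => ⟨⟨hq.1, hrS hq.2⟩, hq.2⟩⟩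
        rw [heq]; exact hN
      · set A := {q : C × ℕ | q.1 ∈ I q.2 ∧ q.1 ∈ gball G c r} with hA
        set B := {q : C × ℕ | q.1 ∈ I q.2 ∧ q.1 ∉ gball G c r} with hB
        set B' := {q : C × ℕ | q.1 ∈ J q.2 ∧ q.1 ∉ gball G c r} with hB'
        have hAfin : A.Finite := hfin.subset fun q hq => hq.1
        have hBfin : B.Finite := hfin.subset fun q hq => hq.1
        have hB'fin : B'.Finite := hfinJ.subset fun q hq => hq.1
        have hsplitI : {q : C × ℕ | q.1 ∈ I q.2} = A ∪ B := by
          ext q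
          simp only [hA, hB, Set.mem_setOf_eq, Set.mem_union]
          tauto
        have hsplitJ : {q : C × ℕ | q.1 ∈ J q.2} = A ∪ B' := by
          ext q
          constructor
          · intro hq
            have h1 : q.1 ∈ I q.2 := hq.1
            by_cases hqr : q.1 ∈ gball G c r
            · exact Or.inl ⟨h1, hqr⟩
            · exact Or.inr ⟨hq, hqr⟩
          · rintro (⟨h1, h2⟩ | ⟨h12, h3⟩)
            · exact ⟨h1, hrS h2⟩
            · exact h12
        have hdisj : Disjoint A B := by
          rw [Set.disjoint_left]; rintro q ⟨-, h2⟩ ⟨-, h4⟩; exact h4 h2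
        have hdisj' : Disjoint A B' := by
          rw [Set.disjoint_left]; rintro q ⟨-, h2⟩ ⟨-, h4⟩; exact h4 h2
        have hcardI : {q : C × ℕ | q.1 ∈ I q.2}.ncard = A.ncard + B.ncard := by
          rw [hsplitI, Set.ncard_union_eq hdisj hAfin hBfin]
        have hcardJ : {q : C × ℕ | q.1 ∈ J q.2}.ncard = A.ncard + B'.ncard := by
          rw [hsplitJ, Set.ncard_union_eq hdisj' hAfin hB'fin]
        have hle : B'.ncard ≤ B.ncard :=
          Set.ncard_le_ncard (fun q hq => ⟨hq.1.1, hq.2⟩) hBfin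
        have hlt : (B.ncard : ℝ) < ε * ((A.ncard : ℝ) + (B.ncard : ℝ)) := by
          have := hfol
          rw [hcardI] at this
          push_cast at this ⊢
          convert this using 2
        have hle' : (B'.ncard : ℝ) ≤ (B.ncard : ℝ) := by exact_mod_cast hle
        show (B'.ncard : ℝ) < ε * ({q : C × ℕ | q.1 ∈ J q.2}.ncard : ℝ)
        rw [hcardJ]
        push_cast
        nlinarith [hle', hlt, hε0.le, hε1.le]
    · -- boundedness
      intro n
      exact (Set.inter_subset_right).trans (gball_mono' G c hr)
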